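/- Let T be a binary turn-based game tree with chance nodes whose root is a leader node of height H, with children subtrees L and R of heights at most H − 1. Suppose the tables A_L, A_R : {0,…,n−1} → ℝ ∪ {−∞} satisfy the pure table guarantee for L and R (with their respective heights). Define A_T[k] := max{ A_c[i] : i ≥ k, c ∈ {L, R} } for each k ∈ {0,…,n−1} (with max ∅ = −∞). Then A_T satisfies the pure table guarantee for T with height H. -/

import Mathlib

open scoped BigOperators

noncomputable section

/-- A binary turn-based game tree with chance nodes: every internal node is a leader node,
a follower node, or a chance node (with probability `p` of going left), and every leaf
carries real utilities `(u1, u2)` for the leader and the follower. -/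
inductive BT : Type
  | leaf (u1 u2 : ℝ) : BT
  | leader (L R : BT) : BT
  | follower (L R : BT) : BT
  | chance (p : ℝ) (L R : BT) : BT

namespace BT

/-- The chance probabilities form probability distributions. -/
def ValidChance : BT → Prop
  | .leaf _ _ => True
  | .leader L R => ValidChance L ∧ ValidChance R
  | .follower L R => ValidChance L ∧ ValidChance R
  | .chance p L R => 0 ≤ p ∧ p ≤ 1 ∧ ValidChance L ∧ ValidChance R

/-- The height of a game tree. -/
def height : BT → ℕ
  | .leaf _ _ => 0
  | .leader L R => max (height L) (height R) + 1
  | .follower L R => max (height L) (height R) + 1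
  | .chance _ L R => max (height L) (height R) + 1

/-- Behavioral strategies of the leader: a probability of moving left at each leader node. -/
def LB : BT → Type
  | .leaf _ _ => PUnit
  | .leader L R => ℝ × LB L × LB R
  | .follower L R => LB L × LB R
  | .chance _ L R => LB L × LB R

/-- Behavioral strategies of the follower: a probability of moving left at each follower
node. -/
def FB : BT → Type
  | .leaf _ _ => PUnit
  | .leader L R => FB L × FB R
  | .follower L R => ℝ × FB L × FB R
  | .chance _ L R => FB L × FB R

/-- Validity of a leader behavioral strategy: all probabilities lie in `[0,1]`. -/
def LBValid : (t : BT) → LB t → Prop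
  | .leaf _ _, _ => True
  | .leader L R, σ => 0 ≤ σ.1 ∧ σ.1 ≤ 1 ∧ LBValid L σ.2.1 ∧ LBValid R σ.2.2
  | .follower L R, σ => LBValid L σ.1 ∧ LBValid R σ.2
  | .chance _ L R, σ => LBValid L σ.1 ∧ LBValid R σ.2

/-- Validity of a follower behavioral strategy: all probabilities lie in `[0,1]`. -/
def FBValid : (t : BT) → FB t → Prop
  | .leaf _ _, _ => True
  | .leader L R, τ => FBValid L τ.1 ∧ FBValid R τ.2
  | .follower L R, τ => 0 ≤ τ.1 ∧ τ.1 ≤ 1 ∧ FBValid L τ.2.1 ∧ FBValid R τ.2.2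
  | .chance _ L R, τ => FBValid L τ.1 ∧ FBValid R τ.2

/-- Expected utilities `(leader, follower)` of a behavioral strategy profile. -/
def eu : (t : BT) → LB t → FB t → ℝ × ℝ
  | .leaf u1 u2, _, _ => (u1, u2)
  | .leader L R, σ, τ => σ.1 • eu L σ.2.1 τ.1 + (1 - σ.1) • eu R σ.2.2 τ.2
  | .follower L R, σ, τ => τ.1 • eu L σ.1 τ.2.1 + (1 - τ.1) • eu R σ.2 τ.2.2
  | .chance p L R, σ, τ => p • eu L σ.1 τ.1 + (1 - p) • eu R σ.2 τ.2

/-- `τ` is a best response of the follower to the leader behavioral strategy `σ`. -/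
def BestResponse (t : BT) (σ : LB t) (τ : FB t) : Prop :=
  FBValid t τ ∧ ∀ τ' : FB t, FBValid t τ' → (eu t σ τ').2 ≤ (eu t σ τ).2

/-- `μ t`: the follower's value of the zero-sum game on `t` in which the leader plays to
minimize the follower's expected utility and the follower plays a best response. -/
def μ (t : BT) : ℝ :=
  sInf {x : ℝ | ∃ σ : LB t, LBValid t σ ∧
    x = sSup {y : ℝ | ∃ τ : FB t, FBValid t τ ∧ y = (eu t σ τ).2}}

/-- A table `A : {0,…,n−1} → ℝ ∪ {−∞}` satisfies the *table guarantee* for a subtree `t`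
with height parameter `H` if:
(a) for every index `k` with `A k > −∞`, the leader has a behavioral strategy, together
with a follower best response to it, giving the follower expected utility exactly `A k`
while securing expected utility at least `k` to the leader; and
(b) no leader behavioral strategy, with a follower best response to it, offers the follower
expected utility strictly more than `A k` while securing expected utility at least `k + H`
to the leader. -/
def TableGuarantee (t : BT) (H n : ℕ) (A : Fin n → EReal) : Prop :=
  (∀ k : Fin n, A k ≠ ⊥ →
    ∃ (σ : LB t) (τ : FB t), LBValid t σ ∧ BestResponse t σ τ ∧
      (((eu t σ τ).2 : ℝ) : EReal) = A k ∧ ((k : ℕ) : ℝ) ≤ (eu t σ τ).1) ∧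
  (∀ (k : Fin n) (σ : LB t) (τ : FB t), LBValid t σ → BestResponse t σ τ →
    ((k : ℕ) : ℝ) + (H : ℝ) ≤ (eu t σ τ).1 → (((eu t σ τ).2 : ℝ) : EReal) ≤ A k)

/-- Pure strategies of the leader: a choice of child (`true` = left) at each leader node. -/
def LP : BT → Type
  | .leaf _ _ => PUnit
  | .leader L R => Bool × LP L × LP R
  | .follower L R => LP L × LP R
  | .chance _ L R => LP L × LP R

/-- The behavioral strategy corresponding to a pure leader strategy. -/
def toLB : (t : BT) → LP t → LB t
  | .leaf _ _, _ => PUnit.unit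
  | .leader L R, π => ((if π.1 then (1 : ℝ) else 0), toLB L π.2.1, toLB R π.2.2)
  | .follower L R, π => (toLB L π.1, toLB R π.2)
  | .chance _ L R, π => (toLB L π.1, toLB R π.2)

/-- The *pure table guarantee*: as the table guarantee, but with the leader restricted to
pure strategies. -/
def PureTableGuarantee (t : BT) (H n : ℕ) (A : Fin n → EReal) : Prop :=
  (∀ k : Fin n, A k ≠ ⊥ →
    ∃ (π : LP t) (τ : FB t), BestResponse t (toLB t π) τ ∧
      (((eu t (toLB t π) τ).2 : ℝ) : EReal) = A k ∧
      ((k : ℕ) : ℝ) ≤ (eu t (toLB t π) τ).1) ∧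
  (∀ (k : Fin n) (π : LP t) (τ : FB t), BestResponse t (toLB t π) τ →
    ((k : ℕ) : ℝ) + (H : ℝ) ≤ (eu t (toLB t π) τ).1 →
    (((eu t (toLB t π) τ).2 : ℝ) : EReal) ≤ A k)

/-- A default follower behavioral strategy. -/
def dFB : (t : BT) → FB t
  | .leaf _ _ => PUnit.unit
  | .leader L R => (dFB L, dFB R)
  | .follower L R => (0, dFB L, dFB R)
  | .chance _ L R => (dFB L, dFB R)

lemma dFB_valid : (t : BT) → FBValid t (dFB t)
  | .leaf _ _ => trivial
  | .leader L R => ⟨dFB_valid L, dFB_valid R⟩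
  | .follower L R => ⟨le_refl (0 : ℝ), zero_le_one, dFB_valid L, dFB_valid R⟩
  | .chance _ L R => ⟨dFB_valid L, dFB_valid R⟩

/-- A default pure leader strategy. -/
def dLP : (t : BT) → LP t
  | .leaf _ _ => PUnit.unit
  | .leader L R => (true, dLP L, dLP R)
  | .follower L R => (dLP L, dLP R)
  | .chance _ L R => (dLP L, dLP R)

lemma toLB_leader_true (L R : BT) (πL : LP L) (πR : LP R) :
    toLB (BT.leader L R) (true, πL, πR) = ((1 : ℝ), toLB L πL, toLB R πR) := by
  simp [toLB]
  rfl

lemma toLB_leader_false (L R : BT) (πL : LP L) (πR : LP R) :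
    toLB (BT.leader L R) (false, πL, πR) = ((0 : ℝ), toLB L πL, toLB R πR) := by
  simp [toLB]
  rfl

lemma eu_leader_one (L R : BT) (σL : LB L) (σR : LB R) (τ : FB (BT.leader L R)) :
    eu (BT.leader L R) ((1 : ℝ), σL, σR) τ = eu L σL τ.1 := by
  show (1 : ℝ) • eu L σL τ.1 + ((1 : ℝ) - 1) • eu R σR τ.2 = _
  simp

lemma eu_leader_zero (L R : BT) (σL : LB L) (σR : LB R) (τ : FB (BT.leader L R)) :
    eu (BT.leader L R) ((0 : ℝ), σL, σR) τ = eu R σR τ.2 := by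
  show (0 : ℝ) • eu L σL τ.1 + ((1 : ℝ) - 0) • eu R σR τ.2 = _
  simp

lemma br_one {L R : BT} {σL : LB L} {σR : LB R} {τL : FB L} {τR : FB R}
    (h : BestResponse L σL τL) (hvR : FBValid R τR) :
    BestResponse (BT.leader L R) ((1 : ℝ), σL, σR) (τL, τR) := by
  refine ⟨⟨h.1, hvR⟩, fun τ' hτ' => ?_⟩
  have := h.2 τ'.1 hτ'.1
  erw [eu_leader_one, eu_leader_one]; exact this

lemma br_one' {L R : BT} {σL : LB L} {σR : LB R} {τ : FB (BT.leader L R)}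
    (h : BestResponse (BT.leader L R) ((1 : ℝ), σL, σR) τ) :
    BestResponse L σL τ.1 := by
  refine ⟨h.1.1, fun τ' hτ' => ?_⟩
  have := h.2 (τ', τ.2) ⟨hτ', h.1.2⟩
  erw [eu_leader_one, eu_leader_one] at this; exact this

lemma br_zero {L R : BT} {σL : LB L} {σR : LB R} {τL : FB L} {τR : FB R}
    (h : BestResponse R σR τR) (hvL : FBValid L τL) :
    BestResponse (BT.leader L R) ((0 : ℝ), σL, σR) (τL, τR) := by
  refine ⟨⟨hvL, h.1⟩, fun τ' hτ' => ?_⟩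
  have := h.2 τ'.2 hτ'.2
  erw [eu_leader_zero, eu_leader_zero]; exact this

lemma br_zero' {L R : BT} {σL : LB L} {σR : LB R} {τ : FB (BT.leader L R)}
    (h : BestResponse (BT.leader L R) ((0 : ℝ), σL, σR) τ) :
    BestResponse R σR τ.2 := by
  refine ⟨h.1.2, fun τ' hτ' => ?_⟩
  have := h.2 (τ.1, τ') ⟨h.1.1, hτ'⟩
  erw [eu_leader_zero, eu_leader_zero] at this; exact this

/-- **leader node, commitment to pure strategies.**  If `T` is a leader node
of height `H` with children `L`, `R` (of heights at most `H − 1`) whose tables `A_L`, `A_R`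
satisfy the pure table guarantee with their respective heights, then the table
`A_T[k] := max { A_c[i] : i ≥ k, c ∈ {L,R} }` (with `max ∅ = −∞`) satisfies the pure table
guarantee for `T` with height `H`. -/
theorem leader_node_table_pure (L R : BT) (hvc : ValidChance (BT.leader L R))
    (H n : ℕ) (hH : H = height (BT.leader L R))
    (A_L A_R : Fin n → EReal)
    (hL : PureTableGuarantee L (height L) n A_L)
    (hR : PureTableGuarantee R (height R) n A_R) :
    PureTableGuarantee (BT.leader L R) H n (fun k =>
      sSup {x : EReal | ∃ i : Fin n, (k : ℕ) ≤ (i : ℕ) ∧ (x = A_L i ∨ x = A_R i)}) := by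
  constructor
  · intro k hk
    set S : Set EReal :=
      {x : EReal | ∃ i : Fin n, (k : ℕ) ≤ (i : ℕ) ∧ (x = A_L i ∨ x = A_R i)} with hS
    have hne : S.Nonempty := ⟨A_L k, k, le_refl _, Or.inl rfl⟩
    have hfin : S.Finite := by
      refine Set.Finite.subset ((Set.finite_range A_L).union (Set.finite_range A_R)) ?_
      rintro x ⟨i, -, h | h⟩
      · exact Or.inl ⟨i, h.symm⟩
      · exact Or.inr ⟨i, h.symm⟩
    have hmem : sSup S ∈ S := hne.csSup_mem hfin
    obtain ⟨i, hki, hx⟩ := hmem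
    have hkiR : ((k : ℕ) : ℝ) ≤ ((i : ℕ) : ℝ) := Nat.cast_le.mpr hki
    rcases hx with hx | hx
    · have hbot : A_L i ≠ ⊥ := by rw [← hx]; exact hk
      obtain ⟨π, τ, hbr, heq, hle⟩ := hL.1 i hbot
      refine ⟨(true, π, dLP R), (τ, dFB R), ?_, ?_, ?_⟩
      · rw [toLB_leader_true]; exact br_one hbr (dFB_valid R)
      · rw [toLB_leader_true]; erw [eu_leader_one]; exact heq.trans hx.symm
      · rw [toLB_leader_true]; erw [eu_leader_one]; exact hkiR.trans hle
    · have hbot : A_R i ≠ ⊥ := by rw [← hx]; exact hk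
      obtain ⟨π, τ, hbr, heq, hle⟩ := hR.1 i hbot
      refine ⟨(false, dLP L, π), (dFB L, τ), ?_, ?_, ?_⟩
      · rw [toLB_leader_false]; exact br_zero hbr (dFB_valid L)
      · rw [toLB_leader_false]; erw [eu_leader_zero]; exact heq.trans hx.symm
      · rw [toLB_leader_false]; erw [eu_leader_zero]; exact hkiR.trans hle
  · rintro k ⟨b, πL, πR⟩ τ hbr hle
    have hHL : ((height L : ℕ) : ℝ) ≤ (H : ℝ) := by
      have : height L ≤ H := by rw [hH, height]; omega
      exact_mod_cast this
    have hHR : ((height R : ℕ) : ℝ) ≤ (H : ℝ) := by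
      have : height R ≤ H := by rw [hH, height]; omega
      exact_mod_cast this
    cases b
    · rw [toLB_leader_false] at hbr hle ⊢
      rw [eu_leader_zero] at hle ⊢
      have hbrR := br_zero' hbr
      have := hR.2 k πR τ.2 hbrR (by linarith)
      refine this.trans (le_sSup ⟨k, le_refl _, Or.inr rfl⟩)
    · rw [toLB_leader_true] at hbr hle ⊢
      rw [eu_leader_one] at hle ⊢
      have hbrL := br_one' hbr
      have := hL.2 k πL τ.1 hbrL (by linarith)
      refine this.trans (le_sSup ⟨k, le_refl _, Or.inl rfl⟩)

end BT
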